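/- Let N be a natural number, β : Fin N → ℝ with β ℓ > 0 for all ℓ, and equip V := Fin N → ℝ³ with the mass-lumped inner product ⟨φ, ψ⟩_h := ∑ ℓ, β ℓ * (φ ℓ ⬝ ψ ℓ). Let k > 0, α > 0, and h, m ∈ V. Then there exists a unique η ∈ V such that for every φ ∈ V: (2/k) * ⟨η, φ⟩_h + ∑ ℓ, β ℓ * ((η ℓ ×ᵥ h ℓ) ⬝ φ ℓ) + (α/(2k)) * ∑ ℓ, β ℓ * ((η ℓ ×ᵥ m ℓ) ⬝ φ ℓ) = (2/k) * ⟨m, φ⟩_h; moreover this η satisfies ‖η ℓ‖ ≤ ‖m ℓ‖ for every node ℓ, and hence ‖η‖_h ≤ ‖m‖_h. -/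

import Mathlib

open scoped InnerProductSpace BigOperators

noncomputable section

/-- ℝ³ with the Euclidean norm and inner product. -/
abbrev R3 := EuclideanSpace ℝ (Fin 3)

/-- The cross product on ℝ³. -/
def cross3 (a b : R3) : R3 := WithLp.toLp 2 (crossProduct a b)

/-- Mass-lumped inner product `⟨φ, ψ⟩_h := ∑ ℓ, β ℓ * (φ ℓ ⬝ ψ ℓ)`. -/
def innh {N : ℕ} (β : Fin N → ℝ) (φ ψ : Fin N → R3) : ℝ :=
  ∑ ℓ, β ℓ * ⟪φ ℓ, ψ ℓ⟫_ℝ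

/-- Mass-lumped norm `‖φ‖_h := √⟨φ, φ⟩_h`. -/
def normh {N : ℕ} (β : Fin N → ℝ) (φ : Fin N → R3) : ℝ :=
  Real.sqrt (innh β φ φ)

/-! ### Auxiliary lemmas -/


lemma inner_expand' (x y : R3) : ⟪x, y⟫_ℝ = x 0 * y 0 + x 1 * y 1 + x 2 * y 2 := by
  simp [PiLp.inner_apply, RCLike.inner_apply, Fin.sum_univ_three]
  ring

lemma cross3_add_smul_right (x a b : R3) (γ : ℝ) :
    cross3 x (a + γ • b) = cross3 x a + γ • cross3 x b := by
  ext i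
  fin_cases i <;> simp [cross3, cross_apply] <;> ring

lemma cross3_sub_left (x y w : R3) :
    cross3 (x - y) w = cross3 x w - cross3 y w := by
  ext i
  fin_cases i <;> simp [cross3, cross_apply] <;> ring

lemma inner_cross3_self (x w : R3) : ⟪cross3 x w, x⟫_ℝ = 0 := by
  rw [inner_expand']
  simp [cross3, cross_apply]
  ring

lemma node_exists (c : ℝ) (hc : 0 < c) (w m0 : R3) :
    ∃ x : R3, c • x + cross3 x w = c • m0 := by
  have hdne : c ^ 2 + (w 0 ^ 2 + w 1 ^ 2 + w 2 ^ 2) ≠ 0 := by positivity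
  refine ⟨(c ^ 2 + (w 0 ^ 2 + w 1 ^ 2 + w 2 ^ 2))⁻¹ •
      ((c ^ 2) • m0 + c • cross3 w m0 + ⟪w, m0⟫_ℝ • w), ?_⟩
  ext i
  fin_cases i <;>
    · simp [cross3, cross_apply, inner_expand', Fin.sum_univ_three, Matrix.vecHead, Matrix.vecTail]
      field_simp
      ring

lemma node_unique (c : ℝ) (hc : 0 < c) (w m0 : R3) (x₁ x₂ : R3)
    (h1 : c • x₁ + cross3 x₁ w = c • m0) (h2 : c • x₂ + cross3 x₂ w = c • m0) :
    x₁ = x₂ := by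
  have hz : c • (x₁ - x₂) + cross3 (x₁ - x₂) w = 0 := by
    rw [cross3_sub_left, smul_sub]
    have : (c • x₁ + cross3 x₁ w) - (c • x₂ + cross3 x₂ w) = 0 := by
      rw [h1, h2, sub_self]
    linear_combination (norm := abel) this
  have hinner : (0 : ℝ) = c * ⟪x₁ - x₂, x₁ - x₂⟫_ℝ := by
    have := congrArg (fun v => ⟪v, x₁ - x₂⟫_ℝ) hz
    simp only [inner_add_left, real_inner_smul_left, inner_cross3_self, add_zero,
      inner_zero_left] at this
    exact this.symm
  have h0 : ⟪x₁ - x₂, x₁ - x₂⟫_ℝ = 0 := by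
    have hnn := real_inner_self_nonneg (x := x₁ - x₂)
    nlinarith
  have := inner_self_eq_zero (𝕜 := ℝ) (x := x₁ - x₂) |>.mp h0
  exact sub_eq_zero.mp this

lemma node_bound (c : ℝ) (hc : 0 < c) (w m0 x : R3)
    (hx : c • x + cross3 x w = c • m0) : ‖x‖ ≤ ‖m0‖ := by
  have h1 : c * ⟪x, x⟫_ℝ = c * ⟪m0, x⟫_ℝ := by
    have := congrArg (fun v => ⟪v, x⟫_ℝ) hx
    simp only [inner_add_left, real_inner_smul_left, inner_cross3_self, add_zero] at this
    exact this
  have h2 : ⟪x, x⟫_ℝ = ⟪m0, x⟫_ℝ := mul_left_cancel₀ (ne_of_gt hc) h1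
  have h3 : ‖x‖ ^ 2 ≤ ‖m0‖ * ‖x‖ := by
    rw [← real_inner_self_eq_norm_sq, h2]
    exact real_inner_le_norm m0 x
  nlinarith [norm_nonneg x, norm_nonneg m0]

lemma sum_single_collapse {N : ℕ} (β : Fin N → ℝ) (X : Fin N → R3) (ℓ : Fin N) (v : R3) :
    ∑ ℓ', β ℓ' * ⟪X ℓ', (Pi.single ℓ v : Fin N → R3) ℓ'⟫_ℝ = β ℓ * ⟪X ℓ, v⟫_ℝ := by
  rw [Finset.sum_eq_single ℓ]
  · simp
  · intro b _ hb
    simp [Pi.single_apply, hb]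
  · intro hmem
    exact absurd (Finset.mem_univ ℓ) hmem

/-- unique solvability of the linear system of the inner fixed-point
iteration (Remark 5.2(i)), together with the nodewise bound `‖η ℓ‖ ≤ ‖m ℓ‖` and the
mass-lumped norm bound `‖η‖_h ≤ ‖m‖_h` for the solution. -/
theorem stmt5 {N : ℕ} (β : Fin N → ℝ) (hβ : ∀ ℓ, 0 < β ℓ)
    (k α : ℝ) (hk : 0 < k) (hα : 0 < α) (h m : Fin N → R3) :
    (∃! η : Fin N → R3, ∀ φ : Fin N → R3,
        (2 / k) * innh β η φ
          + (∑ ℓ, β ℓ * ⟪cross3 (η ℓ) (h ℓ), φ ℓ⟫_ℝ)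
          + (α / (2 * k)) * (∑ ℓ, β ℓ * ⟪cross3 (η ℓ) (m ℓ), φ ℓ⟫_ℝ)
          = (2 / k) * innh β m φ) ∧
    (∀ η : Fin N → R3,
      (∀ φ : Fin N → R3,
        (2 / k) * innh β η φ
          + (∑ ℓ, β ℓ * ⟪cross3 (η ℓ) (h ℓ), φ ℓ⟫_ℝ)
          + (α / (2 * k)) * (∑ ℓ, β ℓ * ⟪cross3 (η ℓ) (m ℓ), φ ℓ⟫_ℝ)
          = (2 / k) * innh β m φ) →
      (∀ ℓ : Fin N, ‖η ℓ‖ ≤ ‖m ℓ‖) ∧ normh β η ≤ normh β m) := by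
  have hc : (0 : ℝ) < 2 / k := by positivity
  -- nodewise reformulation
  have key : ∀ η : Fin N → R3,
      (∀ φ : Fin N → R3,
        (2 / k) * innh β η φ
          + (∑ ℓ, β ℓ * ⟪cross3 (η ℓ) (h ℓ), φ ℓ⟫_ℝ)
          + (α / (2 * k)) * (∑ ℓ, β ℓ * ⟪cross3 (η ℓ) (m ℓ), φ ℓ⟫_ℝ)
          = (2 / k) * innh β m φ) ↔
      (∀ ℓ, (2 / k) • η ℓ + cross3 (η ℓ) (h ℓ + (α / (2 * k)) • m ℓ) = (2 / k) • m ℓ) := by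
    intro η
    constructor
    · intro H ℓ
      apply ext_inner_right ℝ
      intro v
      have hv := H (Pi.single ℓ v)
      simp only [innh, sum_single_collapse] at hv
      rw [cross3_add_smul_right, inner_add_left, inner_add_left, real_inner_smul_left,
        real_inner_smul_left, real_inner_smul_left]
      apply mul_left_cancel₀ (ne_of_gt (hβ ℓ))
      linear_combination hv
    · intro H φ
      simp only [innh, Finset.mul_sum, ← Finset.sum_add_distrib]
      apply Finset.sum_congr rfl
      intro ℓ _
      have := congrArg (fun x => ⟪x, φ ℓ⟫_ℝ) (H ℓ)
      simp only [cross3_add_smul_right, inner_add_left, real_inner_smul_left] at this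
      linear_combination β ℓ * this
  obtain ⟨η₀, hη₀⟩ : ∃ η₀ : Fin N → R3,
      ∀ ℓ, (2 / k) • η₀ ℓ + cross3 (η₀ ℓ) (h ℓ + (α / (2 * k)) • m ℓ) = (2 / k) • m ℓ := by
    choose f hf using fun ℓ => node_exists (2 / k) hc (h ℓ + (α / (2 * k)) • m ℓ) (m ℓ)
    exact ⟨f, hf⟩
  constructor
  · refine ⟨η₀, (key η₀).mpr hη₀, ?_⟩
    intro η₂ hη₂
    have h₂ := (key η₂).mp hη₂
    funext ℓ
    exact node_unique (2 / k) hc _ _ _ _ (h₂ ℓ) (hη₀ ℓ)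
  · intro η hη
    have hn := (key η).mp hη
    have hb : ∀ ℓ, ‖η ℓ‖ ≤ ‖m ℓ‖ := fun ℓ => node_bound (2 / k) hc _ _ _ (hn ℓ)
    refine ⟨hb, ?_⟩
    apply Real.sqrt_le_sqrt
    apply Finset.sum_le_sum
    intro ℓ _
    apply mul_le_mul_of_nonneg_left _ (hβ ℓ).le
    rw [real_inner_self_eq_norm_sq, real_inner_self_eq_norm_sq]
    exact pow_le_pow_left₀ (norm_nonneg _) (hb ℓ) 2

end
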